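/- Let R₁, …, Rₙ be nontrivial commutative rings, each a D-ring and a total ring of fractions, whose cardinalities are pairwise distinct. Then the automorphism group of the multiplicative monoid of the direct product is isomorphic, as a group, to the direct product of the automorphism groups of the multiplicative monoids of the factors: Aut(R₁ × ⋯ × Rₙ, ·) ≅ Aut(R₁, ·) × ⋯ × Aut(Rₙ, ·). -/

import Mathlib

/-- Let each `R i` be a nontrivial commutative ring which is a D-ring and a total
ring of fractions, with pairwise distinct cardinalities. Then the automorphism
group of the multiplicative monoid of the direct product is isomorphic to the
direct product of the automorphism groups of the factors. -/
theorem stmt_18 {n : ℕ} {R : Fin n → Type*} [∀ i, CommRing (R i)]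
    [∀ i, Nontrivial (R i)]
    (hD : ∀ i, ∀ z : R i, (∃ t : R i, t ≠ 0 ∧ z * t = 0) → IsNilpotent z)
    (hT : ∀ i, ∀ a : R i, (¬ ∃ t : R i, t ≠ 0 ∧ a * t = 0) → IsUnit a)
    (hcard : ∀ i j : Fin n, i ≠ j → Cardinal.mk (R i) ≠ Cardinal.mk (R j)) :
    Nonempty (MulAut ((i : Fin n) → R i) ≃* ((i : Fin n) → MulAut (R i))) := by
  classical
  -- idempotents in each factor are 0 or 1
  have aux_idem : ∀ (i : Fin n) (x : R i), x * x = x → x = 0 ∨ x = 1 := by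
    intro i x hx
    by_cases h : ∃ t : R i, t ≠ 0 ∧ x * t = 0
    · left
      obtain ⟨k, hk⟩ := hD i x h
      have hpow : ∀ m, x ^ (m + 1) = x := by
        intro m
        induction m with
        | zero => simp
        | succ m ih => rw [pow_succ, ih, hx]
      rcases Nat.eq_zero_or_pos k with rfl | hk1
      · simp at hk
      · obtain ⟨m, rfl⟩ := Nat.exists_eq_add_of_le hk1
        rw [Nat.add_comm, hpow m] at hk
        exact hk
    · right
      have hu := hT i x h
      exact hu.mul_left_cancel (by rw [hx, mul_one])
  -- the primitive idempotents
  set e : Fin n → (∀ i, R i) := fun i => Pi.single i 1 with he_def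
  have he_idem : ∀ i, e i * e i = e i := by
    intro i; simp [he_def, ← Pi.single_mul]
  have he_ne : ∀ i, e i ≠ 0 := by
    intro i h
    have := congrFun h i
    simp [he_def] at this
  have mul_e : ∀ (z : ∀ j, R j) (k : Fin n), z * e k = Pi.single k (z k) := by
    intro z k
    funext j
    by_cases h : j = k
    · subst h; simp [he_def]
    · simp [he_def, Pi.single_eq_of_ne h]
  have idem_comp : ∀ (x : ∀ j, R j), x * x = x → ∀ j, x j = 0 ∨ x j = 1 := by
    intro x hx j
    exact aux_idem j (x j) (congrFun hx j)
  -- atoms are exactly the e i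
  have atom_char : ∀ a : ∀ j, R j, a * a = a → a ≠ 0 →
      (∀ f : ∀ j, R j, f * f = f → a * f = a ∨ a * f = 0) → ∃ i, a = e i := by
    intro a ha hne hat
    obtain ⟨i, hi⟩ : ∃ i, a i ≠ 0 := by
      by_contra h
      push_neg at h
      exact hne (funext h)
    have hai : a i = 1 := (aux_idem i (a i) (congrFun ha i)).resolve_left hi
    have h1 : a * e i = a := by
      rcases hat (e i) (he_idem i) with h | h
      · exact h
      · exfalso
        have := congrFun h i
        rw [mul_e] at this
        simp [hai] at this
    refine ⟨i, funext fun j => ?_⟩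
    by_cases h : j = i
    · subst h; simp [he_def, hai]
    · have := congrFun h1 j
      rw [mul_e, Pi.single_eq_of_ne h] at this
      simp [he_def, Pi.single_eq_of_ne h, ← this]
  -- main decomposition of an automorphism
  have main : ∀ φ : MulAut (∀ i, R i), ∃ f : ∀ i, MulAut (R i),
      ∀ (x : ∀ i, R i) (i : Fin n), φ x i = f i (x i) := by
    intro φ
    have hφ0 : φ 0 = 0 := by
      have h := map_mul φ 0 (φ.symm 0)
      rw [zero_mul, φ.apply_symm_apply, mul_zero] at h
      exact h
    have hφs0 : φ.symm 0 = 0 := by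
      have h := map_mul φ.symm 0 (φ 0)
      rw [zero_mul, φ.symm_apply_apply, mul_zero] at h
      exact h
    -- φ (e i) is an atom
    have hatom : ∀ i, ∃ j, φ (e i) = e j := by
      intro i
      apply atom_char
      · rw [← map_mul, he_idem]
      · intro h
        apply he_ne i
        have := congrArg φ.symm h
        rwa [φ.symm_apply_apply, hφs0] at this
      · intro f hf
        have hg : φ.symm f * φ.symm f = φ.symm f := by
          rw [← map_mul, hf]
        have h1 : e i * φ.symm f = Pi.single i (φ.symm f i) := by
          rw [mul_comm, mul_e]
        rcases idem_comp _ hg i with h | h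
        · right
          rw [← φ.apply_symm_apply f, ← map_mul, h1, h, Pi.single_zero, hφ0]
        · left
          rw [← φ.apply_symm_apply f, ← map_mul, h1, h]
    choose σ hσ using hatom
    -- φ.symm (e (σ i)) = e i
    have hσs : ∀ i, φ.symm (e (σ i)) = e i := by
      intro i; rw [← hσ, φ.symm_apply_apply]
    -- single stability
    have hstab : ∀ (i : Fin n) (x : R i),
        Pi.single (σ i) (φ (Pi.single i x) (σ i)) = φ (Pi.single i x) := by
      intro i x
      have h1 : Pi.single i x * e i = Pi.single i x := by
        rw [mul_e, Pi.single_eq_same]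
      have h2 : φ (Pi.single i x) * e (σ i) = φ (Pi.single i x) := by
        rw [← hσ, ← map_mul, h1]
      rw [← mul_e, h2]
    have hstabs : ∀ (i : Fin n) (y : R (σ i)),
        Pi.single i (φ.symm (Pi.single (σ i) y) i) = φ.symm (Pi.single (σ i) y) := by
      intro i y
      have h1 : Pi.single (σ i) y * e (σ i) = Pi.single (σ i) y := by
        rw [mul_e, Pi.single_eq_same]
      have h2 : φ.symm (Pi.single (σ i) y) * e i = φ.symm (Pi.single (σ i) y) := by
        rw [← hσs, ← map_mul, h1]
      rw [← mul_e, h2]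
    -- cardinality forces σ = id
    have hσid : ∀ i, σ i = i := by
      intro i
      by_contra h
      apply hcard i (σ i) (fun hh => h hh.symm)
      refine Cardinal.mk_congr ⟨fun x => φ (Pi.single i x) (σ i),
        fun y => φ.symm (Pi.single (σ i) y) i, ?_, ?_⟩
      · intro x
        show φ.symm (Pi.single (σ i) (φ (Pi.single i x) (σ i))) i = x
        rw [hstab, φ.symm_apply_apply, Pi.single_eq_same]
      · intro y
        show φ (Pi.single i (φ.symm (Pi.single (σ i) y) i)) (σ i) = y
        rw [hstabs, φ.apply_symm_apply, Pi.single_eq_same]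
    -- build the component automorphisms
    have hei : ∀ i, φ (e i) = e i := fun i => by rw [hσ i, hσid i]
    have heis : ∀ i, φ.symm (e i) = e i := fun i => by
      conv_lhs => rw [← hei i]
      rw [φ.symm_apply_apply]
    have hstab' : ∀ (i : Fin n) (x : R i),
        Pi.single i (φ (Pi.single i x) i) = φ (Pi.single i x) := by
      intro i x
      have := hstab i x
      rwa [hσid i] at this
    have hstabs' : ∀ (i : Fin n) (y : R i),
        Pi.single i (φ.symm (Pi.single i y) i) = φ.symm (Pi.single i y) := by
      intro i y
      have := hstabs i
      rw [hσid i] at this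
      exact this y
    refine ⟨fun i => ⟨⟨fun x => φ (Pi.single i x) i,
        fun y => φ.symm (Pi.single i y) i, ?_, ?_⟩, ?_⟩, ?_⟩
    · intro x
      simp only
      rw [hstab', φ.symm_apply_apply, Pi.single_eq_same]
    · intro y
      simp only
      rw [hstabs', φ.apply_symm_apply, Pi.single_eq_same]
    · intro x y
      simp only
      rw [Pi.single_mul, map_mul]
      rfl
    · -- the decomposition identity
      intro x i
      have h1 : φ x * e i = φ (Pi.single i (x i)) := by
        rw [← hei, ← map_mul, mul_e]
      have := congrFun h1 i
      rw [mul_e, Pi.single_eq_same] at this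
      exact this
  -- assemble the group isomorphism
  let Φ : ((i : Fin n) → MulAut (R i)) →* MulAut ((i : Fin n) → R i) :=
    MonoidHom.mk' (fun f => MulEquiv.piCongrRight fun i => f i) (by
      intro f g
      ext x
      rfl)
  have hΦinj : Function.Injective Φ := by
    intro f g h
    funext i
    ext xi
    have h2 := congrArg (fun ψ : MulAut ((i : Fin n) → R i) =>
      ψ (Function.update (1 : (j : Fin n) → R j) i xi) i) h
    simpa [Φ, MulEquiv.piCongrRight_apply] using h2
  have hΦsurj : Function.Surjective Φ := by
    intro φ
    obtain ⟨f, hf⟩ := main φ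
    refine ⟨f, ?_⟩
    ext x j
    exact (hf x j).symm
  exact ⟨(MulEquiv.ofBijective Φ ⟨hΦinj, hΦsurj⟩).symm⟩
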